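/- Let H be a complex Hilbert space, U ⊆ ℂᵐ open, and w : U → Aut(H) a smooth map into the continuous linear automorphisms of H such that for each t ∈ U, h_t(u,v) := ⟨w(t)u, v⟩ defines an inner product on H whose norm is equivalent to the original norm. Let H₀ ⊆ H be a closed subspace, and let P(t) : H → H₀ denote the h_t-orthogonal projection. Then the map U × H → H₀, (t,u) ↦ P(t)u, is smooth (in the Fréchet sense). -/

import Mathlib

set_option maxHeartbeats 1000000


/-- Berndtsson's regularity theorem, Hilbert-bundle version: `H` a complex
Hilbert space, `U ⊆ ℂᵐ` open, `w : U → Aut(H)` smooth such that each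
`h_t(u,v) := ⟪w t u, v⟫` is an inner product equivalent to the original one, `H₀` a closed
subspace, and `P t` the `h_t`-orthogonal projection onto `H₀` (characterized by range and
orthogonality).  Then `(t, u) ↦ P t u` is smooth (Fréchet sense) on `U × H`. -/
theorem statement_2 {m : ℕ}
    {H : Type*} [NormedAddCommGroup H] [InnerProductSpace ℂ H] [CompleteSpace H]
    (U : Set (Fin m → ℂ)) (hU : IsOpen U)
    (w : (Fin m → ℂ) → H →L[ℂ] H)
    (hw : ContDiffOn ℝ (⊤ : ℕ∞) w U)
    (hwherm : ∀ t ∈ U, ∀ u v : H, (inner ℂ (w t u) v : ℂ) = starRingEnd ℂ (inner ℂ (w t v) u))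
    (hwpos : ∀ t ∈ U, ∃ c C : ℝ, 0 < c ∧ 0 < C ∧ ∀ u : H,
      c * ‖u‖ ^ 2 ≤ (inner ℂ (w t u) u : ℂ).re ∧ (inner ℂ (w t u) u : ℂ).re ≤ C * ‖u‖ ^ 2)
    (hwaut : ∀ t ∈ U, ∃ wi : H →L[ℂ] H, wi.comp (w t) = ContinuousLinearMap.id ℂ H ∧
      (w t).comp wi = ContinuousLinearMap.id ℂ H)
    (H₀ : Submodule ℂ H) (hH₀ : IsClosed (H₀ : Set H))
    (P : (Fin m → ℂ) → H → H)
    (hPmem : ∀ t ∈ U, ∀ u : H, P t u ∈ H₀)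
    (hPorth : ∀ t ∈ U, ∀ u : H, ∀ v ∈ H₀, (inner ℂ (w t (u - P t u)) v : ℂ) = 0) :
    ContDiffOn ℝ (⊤ : ℕ∞) (fun p : (Fin m → ℂ) × H => P p.1 p.2)
      (U ×ˢ (Set.univ : Set H)) := by
  haveI : CompleteSpace H₀ := hH₀.completeSpace_coe
  set Q : H →L[ℂ] H₀ := Submodule.orthogonalProjectionOnto H₀ with hQdef
  have hQin : ∀ (z : H) (v : H₀), (inner ℂ (Q z) v : ℂ) = inner ℂ z (v : H) := by
    intro z v
    have h0 := Submodule.starProjection_inner_eq_zero z v v.2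
    rw [inner_sub_left, sub_eq_zero] at h0
    rw [Submodule.coe_inner]
    exact h0.symm
  set g : (H →L[ℂ] H) →L[ℂ] (H₀ →L[ℂ] H₀) :=
    ((ContinuousLinearMap.compL ℂ H₀ H H₀).flip H₀.subtypeL).comp
      (ContinuousLinearMap.compL ℂ H H H₀ Q) with hgdef
  set T : (Fin m → ℂ) → (H₀ →L[ℂ] H₀) := fun t => g (w t) with hTdef
  have hTapp : ∀ t (x : H₀), T t x = Q (w t (x : H)) := by
    intro t x; simp [hTdef, hgdef]
  have hTinner : ∀ t (x y : H₀), (inner ℂ (T t x) y : ℂ) = inner ℂ (w t (x : H)) (y : H) := by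
    intro t x y; rw [hTapp, hQin]
  -- each `T t`, `t ∈ U`, is a unit in the Banach algebra `H₀ →L[ℂ] H₀`
  have hunit : ∀ t ∈ U, IsUnit (T t) := by
    intro t ht
    obtain ⟨c, C, hc, hC, hcC⟩ := hwpos t ht
    have hcoer : ∀ x : H₀, c * ‖x‖ ^ 2 ≤ (inner ℂ (T t x) x : ℂ).re := by
      intro x
      rw [hTinner]
      exact (hcC (x : H)).1
    have hlow : ∀ x : H₀, ‖x‖ ≤ c⁻¹ * ‖T t x‖ := by
      intro x
      rcases eq_or_ne x 0 with rfl | hx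
      · simp
      · have hxpos : (0 : ℝ) < ‖x‖ := norm_pos_iff.mpr hx
        have h1 : c * ‖x‖ * ‖x‖ ≤ ‖T t x‖ * ‖x‖ := by
          calc c * ‖x‖ * ‖x‖ = c * ‖x‖ ^ 2 := by ring
            _ ≤ (inner ℂ (T t x) x : ℂ).re := hcoer x
            _ ≤ ‖(inner ℂ (T t x) x : ℂ)‖ := by
                exact Complex.re_le_norm _
            _ ≤ ‖T t x‖ * ‖x‖ := norm_inner_le_norm _ _
        have h2 : c * ‖x‖ ≤ ‖T t x‖ := (mul_le_mul_iff_left₀ hxpos).mp h1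
        calc ‖x‖ = c⁻¹ * (c * ‖x‖) := by field_simp
          _ ≤ c⁻¹ * ‖T t x‖ :=
            mul_le_mul_of_nonneg_left h2 (inv_nonneg.mpr hc.le)
    have hanti : AntilipschitzWith (Real.toNNReal c⁻¹) (T t) :=
      ContinuousLinearMap.antilipschitz_of_bound _ (fun x => by
        rw [Real.coe_toNNReal _ (inv_nonneg.mpr hc.le)]; exact hlow x)
    have hker : LinearMap.ker (T t : H₀ →ₗ[ℂ] H₀) = ⊥ :=
      LinearMap.ker_eq_bot.mpr hanti.injective
    have hclosed : IsClosed (LinearMap.range (T t : H₀ →ₗ[ℂ] H₀) : Set H₀) :=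
      hanti.isClosed_range (T t).uniformContinuous
    haveI : CompleteSpace (LinearMap.range (T t : H₀ →ₗ[ℂ] H₀)) := hclosed.completeSpace_coe
    have horth : (LinearMap.range (T t : H₀ →ₗ[ℂ] H₀))ᗮ = ⊥ := by
      rw [Submodule.eq_bot_iff]
      intro y hy
      have h0 : (inner ℂ (T t y) y : ℂ) = 0 :=
        (Submodule.mem_orthogonal _ y).mp hy (T t y) (LinearMap.mem_range_self _ y)
      have h1 : c * ‖y‖ ^ 2 ≤ 0 := by
        have := hcoer y
        rw [h0] at this
        simpa using this
      by_contra hy'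
      have hxpos : (0 : ℝ) < ‖y‖ := norm_pos_iff.mpr hy'
      have h2 : (0 : ℝ) < c * ‖y‖ ^ 2 := by positivity
      linarith
    have hrange : LinearMap.range (T t : H₀ →ₗ[ℂ] H₀) = ⊤ :=
      Submodule.orthogonal_eq_bot_iff.mp horth
    let e : H₀ ≃L[ℂ] H₀ := ContinuousLinearEquiv.ofBijective (T t) hker hrange
    have he : ∀ y : H₀, e y = T t y := fun y => rfl
    refine ⟨⟨T t, (e.symm : H₀ →L[ℂ] H₀), ?_, ?_⟩, rfl⟩
    · refine ContinuousLinearMap.ext fun x => ?_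
      show T t (e.symm x) = x
      rw [← he]
      exact e.apply_symm_apply x
    · refine ContinuousLinearMap.ext fun x => ?_
      show e.symm (T t x) = x
      rw [← he]
      exact e.symm_apply_apply x
  -- the projection is given by the explicit formula
  have hPeq : ∀ t ∈ U, ∀ u : H,
      P t u = H₀.subtype (Ring.inverse (T t) (Q (w t u))) := by
    intro t ht u
    set x : H₀ := ⟨P t u, hPmem t ht u⟩ with hx
    have hTx : T t x = Q (w t u) := by
      apply ext_inner_right ℂ
      intro v
      rw [hTinner, hQin]
      have h0 := hPorth t ht u v v.2
      rw [map_sub, inner_sub_left, sub_eq_zero] at h0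
      exact h0.symm
    have hinv : Ring.inverse (T t) (T t x) = x := by
      have h1 : Ring.inverse (T t) * (T t) = 1 :=
        Ring.inverse_mul_cancel _ (hunit t ht)
      calc Ring.inverse (T t) (T t x) = (Ring.inverse (T t) * T t) x := rfl
        _ = x := by rw [h1]; rfl
    rw [← hTx, hinv]
    rfl
  -- smoothness of the explicit formula
  have hwp : ContDiffOn ℝ (⊤ : ℕ∞)
      (fun p : (Fin m → ℂ) × H => (w p.1).restrictScalars ℝ) (U ×ˢ Set.univ) :=
    (ContinuousLinearMap.restrictScalarsL ℂ H H ℝ ℝ).contDiff.comp_contDiffOn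
      (hw.comp contDiff_fst.contDiffOn (fun p hp => hp.1))
  have hba : IsBoundedBilinearMap ℝ (fun q : (H →L[ℝ] H) × H => q.1 q.2) :=
    isBoundedBilinearMap_apply
  have happ : ContDiffOn ℝ (⊤ : ℕ∞)
      (fun p : (Fin m → ℂ) × H => w p.1 p.2) (U ×ˢ Set.univ) :=
    (hba.contDiff.comp_contDiffOn
      (hwp.prodMk contDiff_snd.contDiffOn)).congr (fun p _ => rfl)
  have hQw : ContDiffOn ℝ (⊤ : ℕ∞)
      (fun p : (Fin m → ℂ) × H => Q (w p.1 p.2)) (U ×ˢ Set.univ) :=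
    (Q.restrictScalars ℝ).contDiff.comp_contDiffOn happ
  let g' : (H →L[ℂ] H) →L[ℝ] (H₀ →L[ℂ] H₀) :=
    { toLinearMap := g.toLinearMap.restrictScalars ℝ, cont := g.continuous }
  have hgc : ContDiff ℝ (⊤ : ℕ∞) (fun A : H →L[ℂ] H => g A) := by
    have h := ContinuousLinearMap.contDiff (𝕜 := ℝ) (E := H →L[ℂ] H) (F := H₀ →L[ℂ] H₀)
      (n := ((⊤ : ℕ∞) : WithTop ℕ∞)) g'; exact h
  have hTon : ContDiffOn ℝ (⊤ : ℕ∞) T U :=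
    (hgc.comp_contDiffOn hw).congr (fun t _ => rfl)
  have hT1 : ContDiffOn ℝ (⊤ : ℕ∞)
      (fun p : (Fin m → ℂ) × H => T p.1) (U ×ˢ Set.univ) :=
    hTon.comp contDiff_fst.contDiffOn (fun p hp => hp.1)
  have hinvT : ContDiffOn ℝ (⊤ : ℕ∞)
      (fun p : (Fin m → ℂ) × H => Ring.inverse (T p.1)) (U ×ˢ Set.univ) := by
    intro p hp
    have hu := hunit p.1 hp.1
    have h1 : ContDiffAt ℝ (⊤ : ℕ∞) Ring.inverse (T p.1) := by
      have h2 := contDiffAt_ringInverse ℝ (R := H₀ →L[ℂ] H₀) (n := (⊤ : ℕ∞)) hu.unit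
      rwa [hu.unit_spec] at h2
    exact h1.comp_contDiffWithinAt p (hT1 p hp)
  have hrc : ContDiff ℝ (⊤ : ℕ∞)
      (fun A : H₀ →L[ℂ] H₀ => A.restrictScalars ℝ) :=
    ContinuousLinearMap.contDiff (𝕜 := ℝ) (E := H₀ →L[ℂ] H₀) (F := H₀ →L[ℝ] H₀)
      (ContinuousLinearMap.restrictScalarsL ℂ H₀ H₀ ℝ ℝ)
  have hinvT' : ContDiffOn ℝ (⊤ : ℕ∞)
      (fun p : (Fin m → ℂ) × H => (Ring.inverse (T p.1)).restrictScalars ℝ)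
      (U ×ˢ Set.univ) :=
    (hrc.comp_contDiffOn hinvT).congr (fun p _ => rfl)
  have hba2 : IsBoundedBilinearMap ℝ (fun q : (H₀ →L[ℝ] H₀) × H₀ => q.1 q.2) :=
    isBoundedBilinearMap_apply
  have happ2 : ContDiffOn ℝ (⊤ : ℕ∞)
      (fun p : (Fin m → ℂ) × H => Ring.inverse (T p.1) (Q (w p.1 p.2)))
      (U ×ˢ Set.univ) := by
    have h := hba2.contDiff.comp_contDiffOn (hinvT'.prodMk hQw)
    exact h.congr (fun p _ => rfl)
  have hfinal : ContDiffOn ℝ (⊤ : ℕ∞)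
      (fun p : (Fin m → ℂ) × H =>
        (H₀.subtypeL (Ring.inverse (T p.1) (Q (w p.1 p.2))) : H))
      (U ×ˢ Set.univ) :=
    (H₀.subtypeL.restrictScalars ℝ).contDiff.comp_contDiffOn happ2
  exact hfinal.congr (fun p hp => by rw [hPeq p.1 hp.1 p.2]; rfl)
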